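/- For κ > 0 and n ≥ 2, the function a(s) = s^{(n−1)/n} / |∂B_s|, where B_s is a geodesic ball of volume s in the n-dimensional sphere of curvature κ, is monotone increasing in s on (0, |M_κ|). For κ = 0 (Euclidean space), a(s) is the constant n^{−1} ω_n^{−1/n}. -/

import Mathlib

open Set Real MeasureTheory

/-- `sn_κ(r) = sin(√κ r)/√κ` for `κ > 0`, and `sn_0(r) = r`. -/
noncomputable def snk (κ r : ℝ) : ℝ :=
  if κ = 0 then r else Real.sin (Real.sqrt κ * r) / Real.sqrt κ

/-- The volume `ω_n` of the unit ball in `ℝⁿ`. -/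
noncomputable def unitBallVol (n : ℕ) : ℝ :=
  (volume (Metric.ball (0 : EuclideanSpace ℝ (Fin n)) 1)).toReal

/-- The volume of the geodesic ball of radius `r` in the space form `M_κ`. -/
noncomputable def sfBallVol (n : ℕ) (κ r : ℝ) : ℝ :=
  n * unitBallVol n * ∫ t in (0:ℝ)..r, snk κ t ^ (n - 1)

/-- The boundary area of the geodesic ball of radius `r` in the space form `M_κ`. -/
noncomputable def sfBallArea (n : ℕ) (κ r : ℝ) : ℝ :=
  n * unitBallVol n * snk κ r ^ (n - 1)

namespace IsoAux

lemma unitBallVol_pos (n : ℕ) : 0 < unitBallVol n :=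
  ENNReal.toReal_pos (Metric.measure_ball_pos volume 0 one_pos).ne' measure_ball_lt_top.ne

lemma cont_integrand (k : ℝ) (m : ℕ) : Continuous (fun t : ℝ => (Real.sin (k*t)/k)^m) :=
  ((Real.continuous_sin.comp (continuous_const.mul continuous_id)).div_const k).pow m

lemma hasDerivAt_snk {k : ℝ} (hk : k ≠ 0) (r : ℝ) :
    HasDerivAt (fun u : ℝ => Real.sin (k*u)/k) (Real.cos (k*r)) r := by
  have h1 : HasDerivAt (fun u : ℝ => k*u) k r := by
    simpa using (hasDerivAt_id r).const_mul k
  have h2 := (Real.hasDerivAt_sin (k*r)).comp r h1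
  have h3 := h2.div_const k
  have he : Real.cos (k*r) * k / k = Real.cos (k*r) := by field_simp
  rw [he] at h3
  exact h3

lemma hasDerivAt_I (k : ℝ) (m : ℕ) (r : ℝ) :
    HasDerivAt (fun u : ℝ => ∫ t in (0:ℝ)..u, (Real.sin (k*t)/k)^m)
      ((Real.sin (k*r)/k)^m) r :=
  intervalIntegral.integral_hasDerivAt_right
    ((cont_integrand k m).intervalIntegrable 0 r)
    ((cont_integrand k m).stronglyMeasurableAtFilter _ _)
    (cont_integrand k m).continuousAt

lemma I_pos {k : ℝ} (hk : 0 < k) (m : ℕ) {u : ℝ} (hu : 0 < u) (huπ : u < π/k) :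
    0 < ∫ t in (0:ℝ)..u, (Real.sin (k*t)/k)^m := by
  apply intervalIntegral.intervalIntegral_pos_of_pos_on
    ((cont_integrand k m).intervalIntegrable 0 u) ?_ hu
  intro t ht
  have h1 : 0 < k*t := mul_pos hk ht.1
  have h2 : k*t < π := by
    have := ht.2.trans huπ
    rwa [lt_div_iff₀' hk] at this
  exact pow_pos (div_pos (Real.sin_pos_of_pos_of_lt_pi h1 h2) hk) m

lemma key {k : ℝ} (hk : 0 < k) (m : ℕ) {r : ℝ} (hr : 0 < r) (hrπ : r < π/k) :
    Real.cos (k*r) * (∫ t in (0:ℝ)..r, (Real.sin (k*t)/k)^m)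
      < (Real.sin (k*r)/k)^(m+1)/(m+1) := by
  set I : ℝ → ℝ := fun u => ∫ t in (0:ℝ)..u, (Real.sin (k*t)/k)^m with hIdef
  set g : ℝ → ℝ := fun u => (Real.sin (k*u)/k)^(m+1)/(m+1) - Real.cos (k*u) * I u with hgdef
  have hg' : ∀ u : ℝ, HasDerivAt g (k * Real.sin (k*u) * I u) u := by
    intro u
    have hs := hasDerivAt_snk hk.ne' u
    have h1 : HasDerivAt (fun v => (Real.sin (k*v)/k)^(m+1)/((m:ℝ)+1))
        ((Real.sin (k*u)/k)^m * Real.cos (k*u)) u := by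
      have h := (hs.pow (m+1)).div_const ((m:ℝ)+1)
      refine h.congr_deriv ?_
      have hm1 : ((m:ℝ)+1) ≠ 0 := by positivity
      push_cast
      field_simp
    have hklin : HasDerivAt (fun v : ℝ => k*v) k u := by
      simpa using (hasDerivAt_id u).const_mul k
    have hcos : HasDerivAt (fun v : ℝ => Real.cos (k*v)) (-Real.sin (k*u) * k) u :=
      (Real.hasDerivAt_cos (k*u)).comp u hklin
    have h2 := hcos.mul (hasDerivAt_I k m u)
    have h3 := h1.sub h2
    refine h3.congr_deriv ?_
    ring
  have hmono : StrictMonoOn g (Icc 0 r) := by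
    apply strictMonoOn_of_deriv_pos (convex_Icc 0 r)
      (fun u _ => (hg' u).continuousAt.continuousWithinAt)
    intro u hu
    rw [interior_Icc] at hu
    rw [(hg' u).deriv]
    have h2 : u < π/k := hu.2.trans hrπ
    have h1 : 0 < k*u := mul_pos hk hu.1
    have h3 : k*u < π := by rwa [lt_div_iff₀' hk] at h2
    exact mul_pos (mul_pos hk (Real.sin_pos_of_pos_of_lt_pi h1 h3)) (I_pos hk m hu.1 h2)
  have h0 : g 0 = 0 := by
    simp [hgdef, hIdef, Real.sin_zero]
  have hlt := hmono (left_mem_Icc.mpr hr.le) (right_mem_Icc.mpr hr.le) hr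
  rw [h0] at hlt
  have : g r = (Real.sin (k*r)/k)^(m+1)/(m+1) - Real.cos (k*r) * I r := rfl
  rw [this] at hlt
  linarith

end IsoAux

/-- The isoperimetric profile quotient `a(s) = s^{(n-1)/n}/|∂B_s|`, expressed in
terms of the radius of the geodesic ball `B_s` of volume `s` in `M_κ`:
for `κ > 0` it is strictly increasing in the volume `s` (equivalently in the
radius, since the volume is increasing in the radius), while for `κ = 0` it is
the constant `n⁻¹ ω_n^{-1/n}`. -/
theorem isoperimetric_quotient_monotone (n : ℕ) (hn : 2 ≤ n) (κ : ℝ)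
    (hκ : 0 ≤ κ) :
    (0 < κ → StrictMonoOn
        (fun r => sfBallVol n κ r ^ (((n:ℝ) - 1) / n) / sfBallArea n κ r)
        (Set.Ioo 0 (Real.pi / Real.sqrt κ)))
      ∧ (κ = 0 → ∀ r : ℝ, 0 < r →
          sfBallVol n κ r ^ (((n:ℝ) - 1) / n) / sfBallArea n κ r
            = (n : ℝ)⁻¹ * unitBallVol n ^ (-(1 / (n:ℝ)))) := by
  obtain ⟨j, rfl⟩ : ∃ j : ℕ, n = j + 2 := ⟨n - 2, by omega⟩
  have hm : j + 2 - 1 = j + 1 := rfl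
  have hω : 0 < unitBallVol (j+2) := IsoAux.unitBallVol_pos (j+2)
  set ω := unitBallVol (j+2) with hωdef
  set α : ℝ := (((j+2:ℕ):ℝ) - 1) / ((j+2:ℕ):ℝ) with hαdef
  constructor
  · -- positive curvature case
    intro hκ0
    have hk : 0 < Real.sqrt κ := Real.sqrt_pos.mpr hκ0
    set k := Real.sqrt κ with hkdef
    set c : ℝ := ((j+2:ℕ):ℝ) * ω with hcdef
    have hc : 0 < c := by positivity
    set I : ℝ → ℝ := fun u => ∫ t in (0:ℝ)..u, (Real.sin (k*t)/k)^(j+1) with hIdef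
    have hEq : (fun r => sfBallVol (j+2) κ r ^ α / sfBallArea (j+2) κ r)
        = fun r => (c * I r) ^ α / (c * (Real.sin (k*r)/k)^(j+1)) := by
      funext r
      simp only [sfBallVol, sfBallArea, snk, if_neg hκ0.ne', hm, hIdef, hcdef, mul_assoc]
      rfl
    rw [hEq]
    have main : ∀ r ∈ Ioo 0 (π / k), ∃ d : ℝ, 0 < d ∧
        HasDerivAt (fun r => (c * I r) ^ α / (c * (Real.sin (k*r)/k)^(j+1))) d r := by
      rintro r ⟨hr0, hrπ⟩
      have hkr : 0 < k*r := mul_pos hk hr0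
      have hkrπ : k*r < π := by rwa [lt_div_iff₀' hk] at hrπ
      have hS : 0 < Real.sin (k*r)/k :=
        div_pos (Real.sin_pos_of_pos_of_lt_pi hkr hkrπ) hk
      have hIr : 0 < I r := IsoAux.I_pos hk (j+1) hr0 hrπ
      set S := Real.sin (k*r)/k with hSdef
      set C := Real.cos (k*r) with hCdef
      have hV : HasDerivAt (fun u => c * I u) (c * S^(j+1)) r :=
        (IsoAux.hasDerivAt_I k (j+1) r).const_mul c
      have hVpos : 0 < c * I r := mul_pos hc hIr
      have hVα : HasDerivAt (fun u => (c * I u) ^ α)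
          ((c * S^(j+1)) * α * (c * I r) ^ (α - 1)) r :=
        hV.rpow_const (Or.inl hVpos.ne')
      have hs := IsoAux.hasDerivAt_snk hk.ne' r
      have hA : HasDerivAt (fun u => c * (Real.sin (k*u)/k)^(j+1))
          (c * (((j+1:ℕ):ℝ) * S^j * C)) r := (hs.pow (j+1)).const_mul c
      have hApos : 0 < c * S^(j+1) := by positivity
      have hdiv := hVα.div hA hApos.ne'
      refine ⟨_, ?_, hdiv⟩
      apply div_pos ?_ (by positivity)
      have hkey : C * I r < S ^ (j + 2) / ((j:ℝ) + 1 + 1) := by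
        have h := IsoAux.key hk (j+1) hr0 hrπ
        push_cast at h
        exact h
      have hXα : (c * I r) ^ α = (c * I r) ^ (α - 1) * (c * I r) := by
        rw [show α = α - 1 + 1 by ring, Real.rpow_add_one hVpos.ne']
        ring_nf
      rw [hXα]
      have hP : 0 < (c * I r) ^ (α - 1) := Real.rpow_pos_of_pos hVpos _
      have hfact : c * S^(j+1) * α * (c * I r) ^ (α - 1) * (c * S^(j+1))
            - (c * I r) ^ (α - 1) * (c * I r) * (c * (((j+1:ℕ):ℝ) * S^j * C))
          = (c * I r) ^ (α - 1) * (c^2 * ((j+1:ℕ):ℝ) * S^j)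
              * (S^(j+2)/((j:ℝ)+1+1) - C * I r) := by
        rw [hαdef]
        have h2 : ((j+2:ℕ):ℝ) ≠ 0 := by positivity
        push_cast
        field_simp
        ring
      rw [hfact]
      have hsub : 0 < S^(j+2)/((j:ℝ)+1+1) - C * I r := sub_pos.mpr hkey
      have h4 : 0 < c^2 * (((j+1:ℕ)):ℝ) * S^j :=
        mul_pos (mul_pos (by positivity) (by positivity)) (pow_pos hS j)
      exact mul_pos (mul_pos hP h4) hsub
    refine strictMonoOn_of_deriv_pos (convex_Ioo _ _) (fun r hr => ?_) (fun r hr => ?_)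
    · obtain ⟨d, _, hder⟩ := main r hr
      exact hder.continuousAt.continuousWithinAt
    · rw [interior_Ioo] at hr
      obtain ⟨d, hd, hder⟩ := main r hr
      rw [hder.deriv]
      exact hd
  · -- flat case
    intro hκ0 r hr
    subst hκ0
    simp only [sfBallVol, sfBallArea, snk, hm, eq_self_iff_true, if_true]
    rw [← hωdef]
    have e1 : ((j+2:ℕ):ℝ) * ω * ∫ t in (0:ℝ)..r, t^(j+1) = ω * r^(j+2) := by
      rw [integral_pow]
      push_cast
      field_simp
      ring
    rw [e1]
    have hrp : (0:ℝ) < r ^ (j+2) := by positivity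
    have e2 : (ω * r^(j+2)) ^ α = ω ^ α * r^(j+1) := by
      rw [Real.mul_rpow hω.le hrp.le]
      congr 1
      rw [← Real.rpow_natCast r (j+2), ← Real.rpow_mul hr.le,
        ← Real.rpow_natCast r (j+1)]
      congr 1
      rw [hαdef]
      have h2 : ((j+2:ℕ):ℝ) ≠ 0 := by positivity
      push_cast
      field_simp
      ring
    have e3 : ω ^ α = ω * ω ^ (-(1 / ((j+2:ℕ):ℝ))) := by
      have hα1 : α = 1 + (-(1 / ((j+2:ℕ):ℝ))) := by
        rw [hαdef]
        have h2 : ((j+2:ℕ):ℝ) ≠ 0 := by positivity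
        field_simp
        ring
      rw [hα1, Real.rpow_add hω, Real.rpow_one]
    rw [e2, e3]
    have hrp1 : (0:ℝ) < r ^ (j+1) := by positivity
    have hωp : (0:ℝ) < ω ^ (-(1 / ((j+2:ℕ):ℝ))) := Real.rpow_pos_of_pos hω _
    have h2 : ((j+2:ℕ):ℝ) ≠ 0 := by positivity
    field_simp
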